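/- Let L be a finite-dimensional Lie algebra, N an ideal of L, and A an L-module with N ⊆ C_L(A). Then the following are equivalent: (1) N ⊆ E_L(A) := {x ∈ L : α(x) = 0 for all α ∈ Z¹(L,A)}; (2) the inflation map Z¹(L/N, A) → Z¹(L,A) is bijective; (3) the inflation map H¹(L/N, A) → H¹(L,A) is bijective. -/

import Mathlib

theorem descend_aux18 {K L A : Type*} [Field K] [LieRing L] [LieAlgebra K L]
    [AddCommGroup A] [Module K A] [LieRingModule L A] [LieModule K L A]
    (N : LieIdeal K L) (α : L →ₗ[K] A)
    (hα : ∀ x y : L, α ⁅x, y⁆ = ⁅x, α y⁆ - ⁅y, α x⁆)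
    (h0 : ∀ x ∈ N, α x = 0) :
    ∃! γ : (L ⧸ N) →ₗ[K] A,
      (∀ x y : L, γ (LieSubmodule.Quotient.mk (N := N) ⁅x, y⁆) =
        ⁅x, γ (LieSubmodule.Quotient.mk (N := N) y)⁆ -
          ⁅y, γ (LieSubmodule.Quotient.mk (N := N) x)⁆) ∧
      ∀ x : L, γ (LieSubmodule.Quotient.mk (N := N) x) = α x := by
  refine ⟨Submodule.liftQ N.toSubmodule α (fun x hx => h0 x hx), ⟨?_, ?_⟩, ?_⟩
  · intro x y
    exact hα x y
  · intro x; rfl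
  · intro γ ⟨_, hγ⟩
    apply LinearMap.ext
    intro q
    induction q using Quotient.inductionOn with
    | h x => exact (hγ x).trans rfl

/-- Let `N` be an ideal of the finite-dimensional Lie algebra `L` and `A` an
`L`-module with `N ⊆ C_L(A)` (so that `A^N = A` and `A` is naturally an
`L/N`-module).  The following are equivalent:
(1) `N ⊆ E_L(A) = {x ∈ L : α(x) = 0 for all α ∈ Z¹(L,A)}`;
(2) the inflation map `Z¹(L/N, A) → Z¹(L,A)` is bijective: every cocycle on
    `L` arises from a unique cocycle on `L/N`;
(3) the inflation map `H¹(L/N, A) → H¹(L,A)` is bijective: every cocycle on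
    `L` is, modulo a coboundary `x ↦ x·a`, inflated from a cocycle on `L/N`,
    and inflation is injective modulo coboundaries. -/
theorem stmt18 {K L A : Type*} [Field K] [LieRing L] [LieAlgebra K L]
    [FiniteDimensional K L]
    [AddCommGroup A] [Module K A] [LieRingModule L A] [LieModule K L A]
    (N : LieIdeal K L) (hN : ∀ x ∈ N, ∀ a : A, ⁅x, a⁆ = 0) :
    -- (1) ↔ (2)
    ((∀ α : L →ₗ[K] A, (∀ x y : L, α ⁅x, y⁆ = ⁅x, α y⁆ - ⁅y, α x⁆) →
        ∀ x ∈ N, α x = 0) ↔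
      (∀ α : L →ₗ[K] A, (∀ x y : L, α ⁅x, y⁆ = ⁅x, α y⁆ - ⁅y, α x⁆) →
        ∃! γ : (L ⧸ N) →ₗ[K] A,
          (∀ x y : L, γ (LieSubmodule.Quotient.mk (N := N) ⁅x, y⁆) =
            ⁅x, γ (LieSubmodule.Quotient.mk (N := N) y)⁆ -
              ⁅y, γ (LieSubmodule.Quotient.mk (N := N) x)⁆) ∧
          ∀ x : L, γ (LieSubmodule.Quotient.mk (N := N) x) = α x)) ∧
    -- (1) ↔ (3)
    ((∀ α : L →ₗ[K] A, (∀ x y : L, α ⁅x, y⁆ = ⁅x, α y⁆ - ⁅y, α x⁆) →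
        ∀ x ∈ N, α x = 0) ↔
      ((∀ α : L →ₗ[K] A, (∀ x y : L, α ⁅x, y⁆ = ⁅x, α y⁆ - ⁅y, α x⁆) →
        ∃ γ : (L ⧸ N) →ₗ[K] A,
          (∀ x y : L, γ (LieSubmodule.Quotient.mk (N := N) ⁅x, y⁆) =
            ⁅x, γ (LieSubmodule.Quotient.mk (N := N) y)⁆ -
              ⁅y, γ (LieSubmodule.Quotient.mk (N := N) x)⁆) ∧
          ∃ a : A, ∀ x : L, α x = γ (LieSubmodule.Quotient.mk (N := N) x) + ⁅x, a⁆) ∧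
      (∀ γ γ' : (L ⧸ N) →ₗ[K] A,
        (∀ x y : L, γ (LieSubmodule.Quotient.mk (N := N) ⁅x, y⁆) =
          ⁅x, γ (LieSubmodule.Quotient.mk (N := N) y)⁆ -
            ⁅y, γ (LieSubmodule.Quotient.mk (N := N) x)⁆) →
        (∀ x y : L, γ' (LieSubmodule.Quotient.mk (N := N) ⁅x, y⁆) =
          ⁅x, γ' (LieSubmodule.Quotient.mk (N := N) y)⁆ -
            ⁅y, γ' (LieSubmodule.Quotient.mk (N := N) x)⁆) →
        (∃ a : A, ∀ x : L, γ (LieSubmodule.Quotient.mk (N := N) x) -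
            γ' (LieSubmodule.Quotient.mk (N := N) x) = ⁅x, a⁆) →
        ∃ a : A, ∀ x : L, γ (LieSubmodule.Quotient.mk (N := N) x) -
            γ' (LieSubmodule.Quotient.mk (N := N) x) = ⁅x, a⁆))) := by
  constructor
  · constructor
    · intro h1 α hα
      exact descend_aux18 N α hα (h1 α hα)
    · intro h2 α hα x hx
      obtain ⟨γ, ⟨_, hγ⟩, _⟩ := h2 α hα
      have : LieSubmodule.Quotient.mk (N := N) x = 0 :=
        (LieSubmodule.Quotient.mk_eq_zero N).mpr hx
      rw [← hγ x, this, map_zero]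
  · constructor
    · intro h1
      refine ⟨?_, fun _ _ _ _ h => h⟩
      intro α hα
      obtain ⟨γ, ⟨hc, hγ⟩, _⟩ := descend_aux18 N α hα (h1 α hα)
      exact ⟨γ, hc, 0, fun x => by rw [hγ x, lie_zero, add_zero]⟩
    · rintro ⟨h3, -⟩ α hα x hx
      obtain ⟨γ, _, a, ha⟩ := h3 α hα
      have h0 : LieSubmodule.Quotient.mk (N := N) x = 0 :=
        (LieSubmodule.Quotient.mk_eq_zero N).mpr hx
      rw [ha x, h0, map_zero, zero_add, hN x hx]
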